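/- Transversal Clifford gates implement logical gates on encoded states: let n ≡ 1 (mod 4), let U be the n-qubit encoding unitary, let ψ be any 2×2 complex matrix, and let G ∈ {H, S}. Then G^{⊗n} · (U·(ψ ⊗ (I/2)^{⊗(n−1)})·U†) · (G^{⊗n})† = U·((G ψ G†) ⊗ (I/2)^{⊗(n−1)})·U†. -/

import Mathlib

open Matrix

noncomputable section

/-- States of `n` qubits. -/
abbrev NState (n : ℕ) := Fin n → Fin 2

/-- Operators on `n` qubits. -/
abbrev NMat (n : ℕ) := Matrix (NState n) (NState n) ℂ

/-- The Pauli `X` matrix. -/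
def Xmat : Matrix (Fin 2) (Fin 2) ℂ := !![0, 1; 1, 0]

/-- The Pauli `Z` matrix. -/
def Zmat : Matrix (Fin 2) (Fin 2) ℂ := !![1, 0; 0, -1]

/-- The CNOT gate on `n` qubits with control qubit `c` and target qubit `t`:
the permutation matrix mapping the basis state `f` to `f` updated at `t` to
`f t + f c` (mod 2). -/
def nCNOT {n : ℕ} (c t : Fin n) : NMat n :=
  fun g f => if g = Function.update f t (f t + f c) then 1 else 0

/-- The `n`-qubit encoding unitary
`U = (C_{1→2}·C_{1→3} ⋯ C_{1→n})·(C_{2→1}·C_{3→1} ⋯ C_{n→1})` (qubits 1-indexed). -/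
def encU (n : ℕ) (hn : 0 < n) : NMat n :=
  (((List.finRange n).map fun j =>
      if j = ⟨0, hn⟩ then 1 else nCNOT ⟨0, hn⟩ j).prod) *
  (((List.finRange n).map fun j =>
      if j = ⟨0, hn⟩ then 1 else nCNOT j ⟨0, hn⟩).prod)

/-- `G ⊗ I^{⊗(n−1)}`: the single-qubit gate `G` acting on qubit 1, tensored with the
identity on qubits `2,…,n`. -/
def onFirst {n : ℕ} (hn : 0 < n) (G : Matrix (Fin 2) (Fin 2) ℂ) : NMat n :=
  fun g f => G (g ⟨0, hn⟩) (f ⟨0, hn⟩) *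
    (if ∀ j : Fin n, j ≠ ⟨0, hn⟩ → g j = f j then 1 else 0)

/-- `G^{⊗n}`: the `n`-fold Kronecker power of the single-qubit gate `G`. -/
def kronPow {n : ℕ} (G : Matrix (Fin 2) (Fin 2) ℂ) : NMat n :=
  fun g f => ∏ j : Fin n, G (g j) (f j)


/-- The Hadamard gate `H = (X + Z)/√2`. -/
def Hmat : Matrix (Fin 2) (Fin 2) ℂ := ((Real.sqrt 2 : ℂ))⁻¹ • (Xmat + Zmat)

/-- The phase gate `S`. -/
def Smat : Matrix (Fin 2) (Fin 2) ℂ := !![1, 0; 0, Complex.I]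

/-- `ψ ⊗ (I/2)^{⊗(n−1)}`: the single-qubit operator `ψ` on qubit 1 tensored with the
maximally mixed state on qubits `2,…,n`. -/
def mixExt (n : ℕ) (hn : 0 < n) (ψ : Matrix (Fin 2) (Fin 2) ℂ) : NMat n :=
  fun g f => ψ (g ⟨0, hn⟩) (f ⟨0, hn⟩) *
    (if ∀ j : Fin n, j ≠ ⟨0, hn⟩ → g j = f j then ((1 : ℂ) / 2) ^ (n - 1) else 0)

/-! ### Auxiliary machinery -/

section Aux

/-- Permutation-type matrices. -/
def permMat {n : ℕ} (T : NState n → NState n) : NMat n :=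
  fun g f => if g = T f then 1 else 0

lemma permMat_mul {n : ℕ} (T S : NState n → NState n) :
    permMat T * permMat S = permMat (T ∘ S) := by
  ext g f
  simp only [Matrix.mul_apply, permMat, Function.comp]
  rw [Finset.sum_eq_single (S f)]
  · simp
  · intro b _ hb
    simp [hb]
  · simp

lemma permMat_id {n : ℕ} : permMat (n := n) id = 1 := by
  ext g f
  simp [permMat, Matrix.one_apply, eq_comm]

lemma permMat_conj {n : ℕ} (T T' : NState n → NState n)
    (h1 : ∀ f, T (T' f) = f) (h2 : ∀ f, T' (T f) = f) (A : NMat n) :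
    permMat T * A * (permMat T)ᴴ = fun g f => A (T' g) (T' f) := by
  ext g f
  simp only [Matrix.mul_apply, Matrix.conjTranspose_apply, permMat, Finset.sum_mul]
  rw [Finset.sum_eq_single (T' f)]
  · rw [Finset.sum_eq_single (T' g)]
    · simp [h1]
    · intro b _ hb
      have : g ≠ T b := by
        intro hgb; exact hb (by rw [hgb, h2])
      simp [this]
    · simp
  · intro b _ hb
    have : f ≠ T b := by
      intro hfb; exact hb (by rw [hfb, h2])
    simp [this]
  · simp

lemma fin2_add_self (x : Fin 2) : x + x = 0 := by fin_cases x <;> decide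

lemma prodA {n : ℕ} (z : Fin n) (l : List (Fin n)) (hnd : l.Nodup) :
    ((l.map fun j => if j = z then 1 else nCNOT z j).prod)
      = permMat (fun f k => if k ∈ l ∧ k ≠ z then f k + f z else f k) := by
  induction l with
  | nil =>
    have hT : (fun (f : NState n) (k : Fin n) =>
        if k ∈ ([] : List (Fin n)) ∧ k ≠ z then f k + f z else f k) = id := by
      funext f k; simp
    rw [hT, permMat_id]; simp
  | cons j l ih =>
    have hnd' : l.Nodup := hnd.of_cons
    have hjl : j ∉ l := (List.nodup_cons.mp hnd).1
    simp only [List.map_cons, List.prod_cons, ih hnd']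
    by_cases hj : j = z
    · subst hj
      rw [if_pos rfl, one_mul]
      have hT : (fun (f : NState n) (k : Fin n) =>
            if k ∈ l ∧ k ≠ j then f k + f j else f k)
          = (fun (f : NState n) (k : Fin n) =>
            if k ∈ j :: l ∧ k ≠ j then f k + f j else f k) := by
        funext f k
        by_cases hk : k ∈ l ∧ k ≠ j
        · rw [if_pos hk, if_pos ⟨List.mem_cons_of_mem _ hk.1, hk.2⟩]
        · have h2 : ¬(k ∈ j :: l ∧ k ≠ j) := by
            rintro ⟨hm, hne⟩
            exact hk ⟨(List.mem_cons.mp hm).resolve_left hne, hne⟩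
          rw [if_neg hk, if_neg h2]
      rw [hT]
    · rw [if_neg hj]
      rw [show nCNOT z j = permMat (fun f => Function.update f j (f j + f z)) from rfl,
        permMat_mul]
      have hT : ((fun f => Function.update f j (f j + f z)) ∘
            (fun (f : NState n) (k : Fin n) => if k ∈ l ∧ k ≠ z then f k + f z else f k))
          = (fun (f : NState n) (k : Fin n) =>
            if k ∈ j :: l ∧ k ≠ z then f k + f z else f k) := by
        funext f k
        simp only [Function.comp_apply]
        have hgz : (if z ∈ l ∧ z ≠ z then f z + f z else f z) = f z := by simp
        have hgj : (if j ∈ l ∧ j ≠ z then f j + f z else f j) = f j := by simp [hjl]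
        by_cases hk : k = j
        · subst hk
          rw [Function.update_self, hgz, hgj, if_pos ⟨List.mem_cons_self, hj⟩]
        · rw [Function.update_of_ne hk]
          by_cases hkl : k ∈ l ∧ k ≠ z
          · rw [if_pos hkl, if_pos ⟨List.mem_cons_of_mem _ hkl.1, hkl.2⟩]
          · have h2 : ¬(k ∈ j :: l ∧ k ≠ z) := by
              rintro ⟨hm, hne⟩
              exact hkl ⟨(List.mem_cons.mp hm).resolve_left hk, hne⟩
            rw [if_neg hkl, if_neg h2]
      rw [hT]

lemma prodB {n : ℕ} (z : Fin n) (l : List (Fin n)) :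
    ((l.map fun j => if j = z then 1 else nCNOT j z).prod)
      = permMat (fun f k => if k = z
          then f z + ((l.filter (fun j => j ≠ z)).map f).sum else f k) := by
  induction l with
  | nil =>
    have hT : (fun (f : NState n) (k : Fin n) =>
        if k = z then f z + ((List.filter (fun j => j ≠ z) []).map f).sum else f k)
        = id := by
      funext f k
      by_cases hk : k = z <;> simp [hk]
    rw [hT, permMat_id]; simp
  | cons j l ih =>
    simp only [List.map_cons, List.prod_cons, ih]
    by_cases hj : j = z
    · subst hj
      rw [if_pos rfl, one_mul]
      have hfil : (j :: l).filter (fun x => x ≠ j) = l.filter (fun x => x ≠ j) := by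
        simp
      rw [hfil]
    · rw [if_neg hj]
      rw [show nCNOT j z = permMat (fun f => Function.update f z (f z + f j)) from rfl,
        permMat_mul]
      have hfil : (j :: l).filter (fun x => x ≠ z) = j :: l.filter (fun x => x ≠ z) := by
        simp [hj]
      have hT : ((fun f => Function.update f z (f z + f j)) ∘
            (fun (f : NState n) (k : Fin n) =>
              if k = z then f z + ((l.filter (fun x => x ≠ z)).map f).sum else f k))
          = (fun (f : NState n) (k : Fin n) =>
            if k = z then f z + (((j :: l).filter (fun x => x ≠ z)).map f).sum else f k) := by
        funext f k
        simp only [Function.comp_apply, hfil]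
        by_cases hk : k = z
        · subst hk
          rw [Function.update_self]
          simp only [if_pos rfl, if_neg hj, eq_self_iff_true, if_true,
            List.map_cons, List.sum_cons]
          rw [add_assoc, add_comm (List.map f (List.filter _ l)).sum (f j)]
        · rw [Function.update_of_ne hk, if_neg hk, if_neg hk]
      rw [hT]

/-- Sum of all bits. -/
def sumAll {n : ℕ} (f : NState n) : Fin 2 := ∑ j, f j

def Tenc {n : ℕ} (z : Fin n) (f : NState n) : NState n :=
  fun k => if k = z then sumAll f else f k + sumAll f

def Tdec {n : ℕ} (z : Fin n) (g : NState n) : NState n :=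
  fun k => if k = z then sumAll g else g k + g z

lemma sum_erase_eq {n : ℕ} (z : Fin n) (f : NState n) :
    ∑ j ∈ Finset.univ.erase z, f j = sumAll f + f z := by
  have h : f z + ∑ j ∈ Finset.univ.erase z, f j = sumAll f :=
    Finset.add_sum_erase _ f (Finset.mem_univ z)
  calc ∑ j ∈ Finset.univ.erase z, f j
      = f z + f z + ∑ j ∈ Finset.univ.erase z, f j := by
        rw [fin2_add_self, zero_add]
    _ = f z + (f z + ∑ j ∈ Finset.univ.erase z, f j) := by rw [add_assoc]
    _ = f z + sumAll f := by rw [h]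
    _ = sumAll f + f z := add_comm _ _

lemma card_erase {n : ℕ} (z : Fin n) :
    (Finset.univ.erase z).card = n - 1 := by
  rw [Finset.card_erase_of_mem (Finset.mem_univ z), Finset.card_univ, Fintype.card_fin]

lemma nsmul_fin2 (m : ℕ) (hm : m % 2 = 0) (x : Fin 2) : m • x = 0 := by
  obtain ⟨k, rfl⟩ := Nat.even_iff.mpr hm
  rw [← two_mul, mul_comm, mul_nsmul]
  simp [two_nsmul, fin2_add_self]

lemma nsmul_fin2_odd (m : ℕ) (hm : m % 2 = 1) (x : Fin 2) : m • x = x := by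
  obtain ⟨k, rfl⟩ : ∃ k, m = 2 * k + 1 := ⟨m / 2, by omega⟩
  rw [add_nsmul, mul_comm, mul_nsmul, one_nsmul]
  simp [two_nsmul, fin2_add_self]

lemma sum_Tdec {n : ℕ} (z : Fin n) (hodd : n % 2 = 1) (g : NState n) :
    sumAll (Tdec z g) = g z := by
  unfold sumAll Tdec
  rw [← Finset.add_sum_erase _ _ (Finset.mem_univ z), if_pos rfl]
  have h1 : ∑ j ∈ Finset.univ.erase z, (if j = z then sumAll g else g j + g z)
      = ∑ j ∈ Finset.univ.erase z, (g j + g z) := by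
    refine Finset.sum_congr rfl fun j hj => ?_
    rw [if_neg (Finset.ne_of_mem_erase hj)]
  rw [h1, Finset.sum_add_distrib, Finset.sum_const, sum_erase_eq, card_erase]
  rw [nsmul_fin2 (n-1) (by omega)]
  show sumAll g + (sumAll g + g z + 0) = g z
  rw [add_zero, ← add_assoc, fin2_add_self, zero_add]

lemma sum_Tenc {n : ℕ} (z : Fin n) (hodd : n % 2 = 1) (f : NState n) :
    sumAll (Tenc z f) = f z := by
  show ∑ j, Tenc z f j = f z
  rw [← Finset.add_sum_erase _ _ (Finset.mem_univ z)]
  unfold Tenc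
  rw [if_pos rfl]
  have h1 : ∑ j ∈ Finset.univ.erase z, (if j = z then sumAll f else f j + sumAll f)
      = ∑ j ∈ Finset.univ.erase z, (f j + sumAll f) := by
    refine Finset.sum_congr rfl fun j hj => ?_
    rw [if_neg (Finset.ne_of_mem_erase hj)]
  rw [h1, Finset.sum_add_distrib, Finset.sum_const, sum_erase_eq, card_erase]
  rw [nsmul_fin2 (n-1) (by omega)]
  show sumAll f + (sumAll f + f z + 0) = f z
  rw [add_zero, ← add_assoc, fin2_add_self, zero_add]

lemma Tenc_Tdec {n : ℕ} (z : Fin n) (hodd : n % 2 = 1) (g : NState n) :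
    Tenc z (Tdec z g) = g := by
  funext k
  unfold Tenc
  rw [sum_Tdec z hodd]
  by_cases hk : k = z
  · rw [if_pos hk, hk]
  · rw [if_neg hk]
    show (if k = z then sumAll g else g k + g z) + g z = g k
    rw [if_neg hk, add_assoc, fin2_add_self, add_zero]

lemma Tdec_Tenc {n : ℕ} (z : Fin n) (hodd : n % 2 = 1) (f : NState n) :
    Tdec z (Tenc z f) = f := by
  funext k
  unfold Tdec
  rw [sum_Tenc z hodd]
  by_cases hk : k = z
  · rw [if_pos hk, hk]
  · rw [if_neg hk]
    show (if k = z then sumAll f else f k + sumAll f) + Tenc z f z = f k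
    rw [if_neg hk]
    show f k + sumAll f + (if z = z then sumAll f else _) = f k
    rw [if_pos rfl, add_assoc, fin2_add_self, add_zero]

lemma list_filter_sum {n : ℕ} (z : Fin n) (f : NState n) :
    (((List.finRange n).filter (fun j => j ≠ z)).map f).sum
      = sumAll f + f z := by
  rw [← sum_erase_eq z f]
  have h1 : ∀ (l : List (Fin n)), ((l.filter (fun j => j ≠ z)).map f).sum
      = (l.map (fun j => if j = z then 0 else f j)).sum := by
    intro l
    induction l with
    | nil => simp
    | cons a l ih =>
      rw [List.filter_cons]
      by_cases ha : a = z
      · rw [if_neg (by simp [ha])]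
        rw [List.map_cons, List.sum_cons, if_pos ha, zero_add, ih]
      · rw [if_pos (by simp [ha]), List.map_cons, List.map_cons,
          List.sum_cons, List.sum_cons, if_neg ha, ih]
  rw [h1, ← Fin.sum_univ_def]
  rw [show ∑ j, (if j = z then (0 : Fin 2) else f j)
      = ∑ j ∈ Finset.univ.erase z, (if j = z then (0 : Fin 2) else f j) from
    (Finset.sum_subset (Finset.subset_univ _) (by
      intro j _ hj
      rw [if_pos (by simpa using hj)])).symm]
  refine Finset.sum_congr rfl fun j hj => ?_
  rw [if_neg (Finset.ne_of_mem_erase hj)]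

lemma encU_eq {n : ℕ} (hn : 0 < n) (hodd : n % 2 = 1) :
    encU n hn = permMat (Tenc ⟨0, hn⟩) := by
  set z : Fin n := ⟨0, hn⟩
  unfold encU
  rw [prodA z _ (List.nodup_finRange n), prodB z _, permMat_mul]
  refine congrArg permMat ?_
  funext f k
  simp only [Function.comp_apply, List.mem_finRange, true_and]
  have hz : f z + (((List.finRange n).filter (fun j => j ≠ z)).map f).sum
      = sumAll f := by
    rw [list_filter_sum, add_comm (sumAll f) (f z), ← add_assoc,
      fin2_add_self, zero_add]
  unfold Tenc
  by_cases hk : k = z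
  · rw [if_neg (by simp [hk]), if_pos hk, if_pos hk, hz]
  · rw [if_pos hk, if_neg hk, if_neg hk]
    simp only [if_true, eq_self_iff_true]
    rw [hz]

/-- The conjugated mixed-state operator, written explicitly. -/
def Rmat (n : ℕ) (hn : 0 < n) (ψ : Matrix (Fin 2) (Fin 2) ℂ) : NMat n :=
  fun g f => ψ (sumAll g) (sumAll f) *
    (if ∀ j : Fin n, j ≠ ⟨0, hn⟩ → g j + g ⟨0, hn⟩ = f j + f ⟨0, hn⟩
      then ((1 : ℂ) / 2) ^ (n - 1) else 0)

lemma encU_conj {n : ℕ} (hn : 0 < n) (hodd : n % 2 = 1) (ψ : Matrix (Fin 2) (Fin 2) ℂ) :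
    encU n hn * mixExt n hn ψ * (encU n hn)ᴴ = Rmat n hn ψ := by
  set z : Fin n := ⟨0, hn⟩
  rw [encU_eq hn hodd,
    permMat_conj (Tenc z) (Tdec z) (Tenc_Tdec z hodd) (Tdec_Tenc z hodd)]
  funext g f
  show mixExt n hn ψ (Tdec z g) (Tdec z f) = _
  unfold mixExt Tdec Rmat
  rw [if_pos rfl, if_pos rfl]
  congr 1
  congr 1
  refine propext (forall_congr' fun j => ?_)
  refine imp_congr_right fun hj => ?_
  rw [if_neg hj, if_neg hj]

/-- The sign character on `Fin 2`. -/
def chi (x : Fin 2) : ℂ := if x = 0 then 1 else -1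

lemma chi_add (x y : Fin 2) : chi (x + y) = chi x * chi y := by
  fin_cases x <;> fin_cases y <;>
    simp [chi, show ((1 : Fin 2) + 1) = 0 from rfl]

lemma star_chi (x : Fin 2) : star (chi x) = chi x := by
  by_cases h : x = 0 <;> simp [chi, h]

lemma prod_chi {n : ℕ} (v : Fin n → Fin 2) :
    ∏ j, chi (v j) = chi (∑ j, v j) := by
  induction n with
  | zero => simp [chi]
  | succ m ih =>
    rw [Fin.prod_univ_succ, Fin.sum_univ_succ, chi_add, ih]

lemma sum_addc {n : ℕ} (hodd : n % 2 = 1) (a : NState n) (c : Fin 2) :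
    sumAll (fun j => a j + c) = sumAll a + c := by
  unfold sumAll
  rw [Finset.sum_add_distrib, Finset.sum_const, Finset.card_univ, Fintype.card_fin,
    nsmul_fin2_odd n hodd]

lemma cond_iff {n : ℕ} (z : Fin n) (a b : NState n) :
    (∀ j : Fin n, j ≠ z → a j + a z = b j + b z)
      ↔ b = fun j => a j + (a z + b z) := by
  constructor
  · intro h
    funext j
    by_cases hj : j = z
    · subst hj
      have : ∀ x y : Fin 2, y = x + (x + y) := by decide
      exact this _ _
    · have key : ∀ p q u v : Fin 2, p + q = u + v → u = p + (q + v) := by decide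
      exact key _ _ _ _ (h j hj)
  · intro h j hj
    obtain ⟨t, ht⟩ : ∃ t, b = fun j => a j + t := ⟨_, h⟩
    subst ht
    simp only []
    have key : ∀ p q t : Fin 2, p + q = (p + t) + (q + t) := by decide
    exact key _ _ _

lemma cond_of_addc {n : ℕ} (z : Fin n) (a : NState n) (t : Fin 2) :
    ∀ j : Fin n, j ≠ z → a j + a z = (a j + t) + (a z + t) := by
  intro j _
  have key : ∀ p q t : Fin 2, p + q = (p + t) + (q + t) := by decide
  exact key _ _ _

lemma sum_pair {n : ℕ} (z : Fin n) (a : NState n) (F : NState n → ℂ) :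
    ∑ b : NState n, (if ∀ j : Fin n, j ≠ z → a j + a z = b j + b z
        then F b else 0)
      = ∑ c : Fin 2, F (fun j => a j + c) := by
  set e : Fin 2 → NState n := fun c => fun j => a j + c with he
  have hinj : ∀ x ∈ (Finset.univ : Finset (Fin 2)), ∀ y ∈ Finset.univ,
      e x = e y → x = y := by
    intro c _ c' _ h
    have := congrFun h z
    exact add_left_cancel this
  have h0 : ∀ b ∈ (Finset.univ : Finset (NState n)),
      b ∉ Finset.univ.image e →
      (if ∀ j : Fin n, j ≠ z → a j + a z = b j + b z then F b else 0) = 0 := by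
    intro b _ hb
    rw [if_neg]
    intro hcond
    exact hb (Finset.mem_image.mpr ⟨a z + b z, Finset.mem_univ _,
      ((cond_iff z a b).mp hcond).symm⟩)
  rw [← Finset.sum_subset (Finset.subset_univ (Finset.univ.image e)) h0,
    Finset.sum_image hinj]
  refine Finset.sum_congr rfl fun c _ => ?_
  rw [if_pos (cond_of_addc z a c)]

lemma char_sum {n : ℕ} (u v : NState n) :
    ∑ a : NState n, ∏ j, chi (u j * a j + v j)
      = (∏ j, chi (v j)) * ∏ j, (1 + chi (u j)) := by
  rw [← Fintype.piFinset_univ,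
    ← Finset.prod_univ_sum (fun _ => (Finset.univ : Finset (Fin 2)))
      (fun j x => chi (u j * x + v j))]
  rw [← Finset.prod_mul_distrib]
  refine Finset.prod_congr rfl fun j _ => ?_
  rw [Fin.sum_univ_two]
  simp only [chi_add]
  have h0 : chi (u j * 0) = 1 := by simp [chi]
  have h1 : chi (u j * 1) = chi (u j) := by rw [mul_one]
  rw [h0, h1]
  ring

lemma prod_one_add_chi {n : ℕ} (u : NState n) :
    ∏ j, (1 + chi (u j)) = if (∀ j, u j = 0) then (2 : ℂ) ^ n else 0 := by
  by_cases h : ∀ j, u j = 0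
  · rw [if_pos h]
    have h2 : ∀ j : Fin n, (1 + chi (u j)) = 2 := by
      intro j; rw [h j]; norm_num [chi]
    rw [Finset.prod_congr rfl fun j _ => h2 j, Finset.prod_const,
      Finset.card_univ, Fintype.card_fin]
  · rw [if_neg h]
    push_neg at h
    obtain ⟨j, hj⟩ := h
    refine Finset.prod_eq_zero (Finset.mem_univ j) ?_
    have : u j = 1 := by omega
    rw [this]; norm_num [chi]

/-! ### Single-qubit gate facts -/

def rr : ℂ := ((Real.sqrt 2 : ℂ))⁻¹

lemma rr_mul_self : rr * rr * 2 = 1 := by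
  rw [rr, ← mul_inv, ← Complex.ofReal_mul, Real.mul_self_sqrt (by norm_num)]
  norm_num

lemma star_rr : star rr = rr := by
  rw [rr]
  simp [Complex.star_def, map_inv₀, Complex.conj_ofReal]

lemma Hentry (x y : Fin 2) : Hmat x y = rr * chi (x * y) := by
  fin_cases x <;> fin_cases y <;>
    simp [Hmat, Xmat, Zmat, chi, rr, show ((1 : Fin 2) * 1) = 1 from rfl]

lemma star_Hentry (x y : Fin 2) : star (Hmat x y) = Hmat x y := by
  rw [Hentry, star_mul', star_rr, star_chi, mul_comm]

lemma S_offdiag (x y : Fin 2) (h : x ≠ y) : Smat x y = 0 := by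
  fin_cases x <;> fin_cases y <;> simp_all [Smat]

lemma Sconj (ψ : Matrix (Fin 2) (Fin 2) ℂ) (p q : Fin 2) :
    (Smat * ψ * Smatᴴ) p q = Smat p p * ψ p q * star (Smat q q) := by
  rw [Matrix.mul_apply]
  simp only [Matrix.mul_apply, Matrix.conjTranspose_apply, Fin.sum_univ_two]
  fin_cases p <;> fin_cases q <;> simp [Smat]

lemma s_mul_star_self (x : Fin 2) : Smat x x * star (Smat x x) = 1 := by
  fin_cases x <;> simp [Smat]

lemma s_mul_star_flip (x : Fin 2) :
    Smat x x * star (Smat (x + 1) (x + 1)) = -Complex.I * chi x := by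
  fin_cases x
  · simp [Smat, chi, show ((0 : Fin 2) + 1) = 1 from rfl, Complex.conj_I]
  · simp [Smat, chi, show ((1 : Fin 2) + 1) = 0 from rfl]

lemma negI_pow (n : ℕ) (h4 : n % 4 = 1) : (-Complex.I) ^ n = -Complex.I := by
  conv_lhs => rw [show n = 4 * (n / 4) + 1 by omega]
  rw [pow_add, pow_mul, pow_one]
  have h : (-Complex.I) ^ 4 = 1 := by
    rw [show (4 : ℕ) = 2 * 2 from rfl, pow_mul, neg_sq, Complex.I_sq]
    norm_num
  rw [h, one_pow, one_mul]

lemma parity_expand (s c : Fin 2) (ψ : Matrix (Fin 2) (Fin 2) ℂ) :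
    ψ s (s + c) = ∑ p : Fin 2, (1 + chi (s + p)) / 2 * ψ p (p + c) := by
  fin_cases s <;>
    simp [Fin.sum_univ_two, chi, show ((1 : Fin 2) + 1) = 0 from rfl,
      show ((0 : Fin 2) + 1) = 1 from rfl] <;> ring

lemma HH0 (ψ : Matrix (Fin 2) (Fin 2) ℂ) (s : Fin 2) :
    (Hmat * ψ * Hmatᴴ) s s
      = (1 / 2) * ∑ c : Fin 2, ∑ p : Fin 2, chi (c * s) * ψ p (p + c) := by
  have h2 := rr_mul_self
  rw [Matrix.mul_apply]
  simp only [Matrix.mul_apply, Matrix.conjTranspose_apply, Fin.sum_univ_two]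
  fin_cases s
  · simp [Hentry, star_Hentry, chi, show ((0 : Fin 2) + 1) = 1 from rfl,
      show ((1 : Fin 2) + 1) = 0 from rfl, starRingEnd_apply, star_rr, star_mul',
      star_chi]
    linear_combination (2⁻¹ * (ψ 0 0 + ψ 0 1 + ψ 1 0 + ψ 1 1)) * h2
  · simp [Hentry, star_Hentry, chi, show ((0 : Fin 2) + 1) = 1 from rfl,
      show ((1 : Fin 2) + 1) = 0 from rfl, show ((1 : Fin 2) * 1) = 1 from rfl,
      starRingEnd_apply, star_rr, star_mul', star_chi]
    linear_combination (2⁻¹ * (ψ 0 0 - ψ 0 1 - ψ 1 0 + ψ 1 1)) * h2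

lemma HH1 (ψ : Matrix (Fin 2) (Fin 2) ℂ) (s : Fin 2) :
    (Hmat * ψ * Hmatᴴ) (s + 1) s
      = (1 / 2) * ∑ c : Fin 2, ∑ p : Fin 2, chi (c * s) * chi p * ψ p (p + c) := by
  have h2 := rr_mul_self
  rw [Matrix.mul_apply]
  simp only [Matrix.mul_apply, Matrix.conjTranspose_apply, Fin.sum_univ_two]
  fin_cases s
  · simp [Hentry, star_Hentry, chi, show ((0 : Fin 2) + 1) = 1 from rfl,
      show ((1 : Fin 2) + 1) = 0 from rfl, show ((1 : Fin 2) * 1) = 1 from rfl,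
      starRingEnd_apply, star_rr, star_mul', star_chi]
    linear_combination (2⁻¹ * (ψ 0 0 + ψ 0 1 - ψ 1 0 - ψ 1 1)) * h2
  · simp [Hentry, star_Hentry, chi, show ((0 : Fin 2) + 1) = 1 from rfl,
      show ((1 : Fin 2) + 1) = 0 from rfl, show ((1 : Fin 2) * 1) = 1 from rfl,
      starRingEnd_apply, star_rr, star_mul', star_chi]
    linear_combination (2⁻¹ * (ψ 0 0 - ψ 0 1 + ψ 1 0 - ψ 1 1)) * h2

end Aux

section Main

lemma kronH_eq {n : ℕ} (x y : NState n) :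
    kronPow (n := n) Hmat x y = rr ^ n * ∏ j, chi (x j * y j) := by
  unfold kronPow
  rw [Finset.prod_congr rfl fun j _ => Hentry (x j) (y j), Finset.prod_mul_distrib,
    Finset.prod_const, Finset.card_univ, Fintype.card_fin]

lemma kronH_star {n : ℕ} (x y : NState n) :
    star (kronPow (n := n) Hmat x y) = kronPow (n := n) Hmat x y := by
  unfold kronPow
  rw [← starRingEnd_apply, map_prod]
  refine Finset.prod_congr rfl fun j _ => ?_
  rw [starRingEnd_apply, star_Hentry]

lemma kronS_offdiag {n : ℕ} (x y : NState n) (h : x ≠ y) :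
    kronPow (n := n) Smat x y = 0 := by
  obtain ⟨j, hj⟩ := Function.ne_iff.mp h
  exact Finset.prod_eq_zero (Finset.mem_univ j) (S_offdiag _ _ hj)

lemma ite_two_pow (n : ℕ) (C : Prop) [Decidable C] :
    (if C then (2 : ℂ) ^ n else 0) = (2 : ℂ) ^ n * (if C then 1 else 0) := by
  split_ifs <;> ring

lemma entry_reduce {n : ℕ} (hn : 0 < n) (hodd : n % 2 = 1)
    (G ψ : Matrix (Fin 2) (Fin 2) ℂ) (g f : NState n) :
    (kronPow (n := n) G * Rmat n hn ψ * (kronPow (n := n) G)ᴴ) g f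
      = ∑ a : NState n, ∑ c : Fin 2,
          kronPow (n := n) G g a * (ψ (sumAll a) (sumAll a + c) * ((1 : ℂ) / 2) ^ (n - 1)
            * star (kronPow (n := n) G f (fun j => a j + c))) := by
  rw [Matrix.mul_apply]
  simp only [Matrix.mul_apply, Matrix.conjTranspose_apply, Finset.sum_mul]
  rw [Finset.sum_comm]
  refine Finset.sum_congr rfl fun a _ => ?_
  have hterm : ∀ b : NState n,
      kronPow (n := n) G g a * Rmat n hn ψ a b * star (kronPow (n := n) G f b)
        = (if ∀ j : Fin n, j ≠ ⟨0, hn⟩ → a j + a ⟨0, hn⟩ = b j + b ⟨0, hn⟩ then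
            kronPow (n := n) G g a * (ψ (sumAll a) (sumAll b) * ((1 : ℂ) / 2) ^ (n - 1)
              * star (kronPow (n := n) G f b)) else 0) := by
    intro b
    unfold Rmat
    split_ifs with h
    · ring
    · ring
  rw [Finset.sum_congr rfl fun b _ => hterm b,
    sum_pair ⟨0, hn⟩ a
      (fun b => kronPow (n := n) G g a * (ψ (sumAll a) (sumAll b) * ((1 : ℂ) / 2) ^ (n - 1)
        * star (kronPow (n := n) G f b)))]
  refine Finset.sum_congr rfl fun c _ => ?_
  rw [sum_addc hodd a c]

lemma Scase {n : ℕ} (hn : 0 < n) (h4 : n % 4 = 1) (ψ : Matrix (Fin 2) (Fin 2) ℂ) :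
    kronPow (n := n) Smat * Rmat n hn ψ * (kronPow (n := n) Smat)ᴴ
      = Rmat n hn (Smat * ψ * Smatᴴ) := by
  have hodd : n % 2 = 1 := by omega
  ext g f
  rw [entry_reduce hn hodd]
  set z : Fin n := ⟨0, hn⟩ with hzdef
  set w : ℂ := ((1 : ℂ) / 2) ^ (n - 1) with hwdef
  rw [Finset.sum_eq_single g
    (fun a _ ha => by
      have h0 : kronPow (n := n) Smat g a = 0 := kronS_offdiag g a (Ne.symm ha)
      simp [h0])
    (fun h => absurd (Finset.mem_univ g) h)]
  have hcond_of : ∀ t : Fin 2, (f = fun j => g j + t) →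
      (∀ j : Fin n, j ≠ z → g j + g z = f j + f z) := by
    intro t ht j hj
    rw [ht]
    exact cond_of_addc z g t j hj
  by_cases hc : ∀ j : Fin n, j ≠ z → g j + g z = f j + f z
  · obtain ⟨t, ht⟩ : ∃ t, f = fun j => g j + t := ⟨_, (cond_iff z g f).mp hc⟩
    subst ht
    show _ = Rmat n hn (Smat * ψ * Smatᴴ) g (fun j => g j + t)
    unfold Rmat
    rw [if_pos hc, sum_addc hodd g t, Sconj, Fin.sum_univ_two]
    have htcases : t = 0 ∨ t = 1 := by
      have h : ∀ x : Fin 2, x = 0 ∨ x = 1 := by decide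
      exact h t
    rcases htcases with rfl | rfl
    · -- t = 0 : f = g
      have hfg : (fun j => g j + (0 : Fin 2)) = g := by funext j; exact add_zero _
      rw [hfg]
      have hne : g ≠ fun j => g j + (1 : Fin 2) := by
        intro h
        have h2 := congrFun h z
        have : ∀ x : Fin 2, x ≠ x + 1 := by decide
        exact this (g z) h2
      rw [kronS_offdiag g (fun j => g j + 1) hne]
      have hKK : kronPow (n := n) Smat g g * star (kronPow (n := n) Smat g g) = 1 := by
        unfold kronPow
        rw [← starRingEnd_apply, map_prod, ← Finset.prod_mul_distrib]
        have hterm : ∀ j : Fin n,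
            Smat (g j) (g j) * (starRingEnd ℂ) (Smat (g j) (g j)) = 1 := by
          intro j
          rw [starRingEnd_apply]
          exact s_mul_star_self (g j)
        rw [Finset.prod_congr rfl fun j _ => hterm j, Finset.prod_const_one]
      have hSS : Smat (sumAll g) (sumAll g) * star (Smat (sumAll g) (sumAll g)) = 1 :=
        s_mul_star_self _
      rw [star_zero]
      calc kronPow (n := n) Smat g g * (ψ (sumAll g) (sumAll g + 0) * w *
              star (kronPow (n := n) Smat g g)) +
            kronPow (n := n) Smat g g * (ψ (sumAll g) (sumAll g + 1) * w * 0)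
          = (kronPow (n := n) Smat g g * star (kronPow (n := n) Smat g g)) *
              (ψ (sumAll g) (sumAll g + 0) * w) := by ring
        _ = ψ (sumAll g) (sumAll g + 0) * w := by rw [hKK, one_mul]
        _ = (Smat (sumAll g) (sumAll g) * star (Smat (sumAll g) (sumAll g))) *
              (ψ (sumAll g) (sumAll g + 0) * w) := by rw [hSS, one_mul]
        _ = Smat (sumAll g) (sumAll g) * ψ (sumAll g) (sumAll g + 0) *
              star (Smat (sumAll g + 0) (sumAll g + 0)) * w := by
            rw [add_zero (sumAll g)]; ring
    · -- t = 1 : f = g + 1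
      have hne : (fun j => g j + (1 : Fin 2)) ≠ fun j => g j + (0 : Fin 2) := by
        intro h
        have h2 := congrFun h z
        have : ∀ x : Fin 2, x + 1 ≠ x + 0 := by decide
        exact this (g z) h2
      rw [kronS_offdiag _ _ hne, star_zero]
      have hKK : kronPow (n := n) Smat g g *
          star (kronPow (n := n) Smat (fun j => g j + 1) (fun j => g j + 1))
            = -Complex.I * chi (sumAll g) := by
        unfold kronPow
        rw [← starRingEnd_apply, map_prod, ← Finset.prod_mul_distrib]
        have hterm : ∀ j : Fin n, Smat (g j) (g j) *
            (starRingEnd ℂ) (Smat (g j + 1) (g j + 1)) = -Complex.I * chi (g j) := by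
          intro j
          rw [starRingEnd_apply]
          exact s_mul_star_flip (g j)
        rw [Finset.prod_congr rfl fun j _ => hterm j, Finset.prod_mul_distrib,
          Finset.prod_const, Finset.card_univ, Fintype.card_fin, negI_pow n h4,
          prod_chi]
        rfl
      have hSS : Smat (sumAll g) (sumAll g) * star (Smat (sumAll g + 1) (sumAll g + 1))
          = -Complex.I * chi (sumAll g) := s_mul_star_flip _
      calc kronPow (n := n) Smat g g * (ψ (sumAll g) (sumAll g + 0) * w * 0) +
            kronPow (n := n) Smat g g * (ψ (sumAll g) (sumAll g + 1) * w *
              star (kronPow (n := n) Smat (fun j => g j + 1) (fun j => g j + 1)))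
          = (kronPow (n := n) Smat g g *
              star (kronPow (n := n) Smat (fun j => g j + 1) (fun j => g j + 1))) *
              (ψ (sumAll g) (sumAll g + 1) * w) := by ring
        _ = (-Complex.I * chi (sumAll g)) * (ψ (sumAll g) (sumAll g + 1) * w) := by
            rw [hKK]
        _ = (Smat (sumAll g) (sumAll g) * star (Smat (sumAll g + 1) (sumAll g + 1))) *
              (ψ (sumAll g) (sumAll g + 1) * w) := by rw [hSS]
        _ = Smat (sumAll g) (sumAll g) * ψ (sumAll g) (sumAll g + 1) *
              star (Smat (sumAll g + 1) (sumAll g + 1)) * w := by ring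
  · show _ = Rmat n hn (Smat * ψ * Smatᴴ) g f
    unfold Rmat
    rw [if_neg hc, mul_zero, Fin.sum_univ_two]
    have hf0 : f ≠ fun j => g j + (0 : Fin 2) := fun h => hc (hcond_of 0 h)
    have hf1 : f ≠ fun j => g j + (1 : Fin 2) := fun h => hc (hcond_of 1 h)
    rw [kronS_offdiag f _ hf0, kronS_offdiag f _ hf1, star_zero]
    ring

lemma Hcase {n : ℕ} (hn : 0 < n) (h4 : n % 4 = 1) (ψ : Matrix (Fin 2) (Fin 2) ℂ) :
    kronPow (n := n) Hmat * Rmat n hn ψ * (kronPow (n := n) Hmat)ᴴ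
      = Rmat n hn (Hmat * ψ * Hmatᴴ) := by
  have hodd : n % 2 = 1 := by omega
  ext g f
  rw [entry_reduce hn hodd]
  set z : Fin n := ⟨0, hn⟩ with hzdef
  set w : ℂ := ((1 : ℂ) / 2) ^ (n - 1) with hwdef
  have hr2n : rr ^ n * rr ^ n * (2 : ℂ) ^ n = 1 := by
    rw [← mul_pow, ← mul_pow, rr_mul_self, one_pow]
  rw [Finset.sum_comm]
  have key : ∀ c : Fin 2,
      (∑ a : NState n, kronPow (n := n) Hmat g a *
          (ψ (sumAll a) (sumAll a + c) * w *
            star (kronPow (n := n) Hmat f (fun j => a j + c))))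
        = (w / 2) * chi (c * sumAll f) *
            ∑ p : Fin 2, ψ p (p + c) *
              ((if (∀ j, g j + f j = 0) then (1 : ℂ) else 0)
                + chi p * (if (∀ j, g j + f j + 1 = 0) then (1 : ℂ) else 0)) := by
    intro c
    have hsummand : ∀ a : NState n,
        kronPow (n := n) Hmat g a *
            (ψ (sumAll a) (sumAll a + c) * w *
              star (kronPow (n := n) Hmat f (fun j => a j + c)))
          = ∑ p : Fin 2, (rr ^ n * rr ^ n * w / 2) * ψ p (p + c) *
              ((∏ j, chi ((g j + f j) * a j + c * f j))
                + chi p * ∏ j, chi ((g j + f j + 1) * a j + c * f j)) := by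
      intro a
      rw [kronH_star, kronH_eq, kronH_eq, parity_expand (sumAll a) c ψ,
        Finset.sum_mul, Finset.sum_mul, Finset.mul_sum]
      refine Finset.sum_congr rfl fun p _ => ?_
      have hx : chi (sumAll a + p) = chi p * ∏ j, chi (a j) := by
        rw [chi_add, prod_chi]
        exact mul_comm _ _
      rw [hx]
      have hm1 : (∏ j, chi (g j * a j)) * (∏ j, chi (f j * (a j + c)))
          = ∏ j, chi ((g j + f j) * a j + c * f j) := by
        rw [← Finset.prod_mul_distrib]
        refine Finset.prod_congr rfl fun j _ => ?_
        rw [← chi_add]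
        congr 1
        have h : ∀ gj fj aj c : Fin 2,
            gj * aj + fj * (aj + c) = (gj + fj) * aj + c * fj := by decide
        exact h _ _ _ _
      have hm2 : (∏ j, chi (a j)) * ((∏ j, chi (g j * a j)) * (∏ j, chi (f j * (a j + c))))
          = ∏ j, chi ((g j + f j + 1) * a j + c * f j) := by
        rw [← Finset.prod_mul_distrib, ← Finset.prod_mul_distrib]
        refine Finset.prod_congr rfl fun j _ => ?_
        rw [← chi_add, ← chi_add]
        congr 1
        have h : ∀ gj fj aj c : Fin 2,
            aj + (gj * aj + fj * (aj + c)) = (gj + fj + 1) * aj + c * fj := by decide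
        exact h _ _ _ _
      linear_combination (rr ^ n * rr ^ n * w * ψ p (p + c) / 2) * hm1
        + (rr ^ n * rr ^ n * w * ψ p (p + c) * chi p / 2) * hm2
    rw [Finset.sum_congr rfl fun a _ => hsummand a, Finset.sum_comm]
    have hchar1 : ∑ a : NState n, ∏ j, chi ((g j + f j) * a j + c * f j)
        = chi (c * sumAll f) * (if (∀ j, g j + f j = 0) then (2 : ℂ) ^ n else 0) := by
      rw [char_sum (fun j => g j + f j) (fun j => c * f j), prod_one_add_chi]
      congr 1
      rw [prod_chi]
      congr 1
      rw [← Finset.mul_sum]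
      rfl
    have hchar2 : ∑ a : NState n, ∏ j, chi ((g j + f j + 1) * a j + c * f j)
        = chi (c * sumAll f) * (if (∀ j, g j + f j + 1 = 0) then (2 : ℂ) ^ n else 0) := by
      rw [char_sum (fun j => g j + f j + 1) (fun j => c * f j), prod_one_add_chi]
      congr 1
      rw [prod_chi]
      congr 1
      rw [← Finset.mul_sum]
      rfl
    rw [Finset.mul_sum]
    refine Finset.sum_congr rfl fun p _ => ?_
    calc ∑ a : NState n, (rr ^ n * rr ^ n * w / 2) * ψ p (p + c) *
            ((∏ j, chi ((g j + f j) * a j + c * f j))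
              + chi p * ∏ j, chi ((g j + f j + 1) * a j + c * f j))
        = (rr ^ n * rr ^ n * w / 2) * ψ p (p + c) *
              (∑ a : NState n, ∏ j, chi ((g j + f j) * a j + c * f j))
            + (rr ^ n * rr ^ n * w / 2) * ψ p (p + c) * chi p *
              (∑ a : NState n, ∏ j, chi ((g j + f j + 1) * a j + c * f j)) := by
          rw [Finset.mul_sum, Finset.mul_sum, ← Finset.sum_add_distrib]
          exact Finset.sum_congr rfl fun a _ => by ring
      _ = (w / 2) * chi (c * sumAll f) *
            (ψ p (p + c) *
              ((if (∀ j, g j + f j = 0) then (1 : ℂ) else 0)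
                + chi p * (if (∀ j, g j + f j + 1 = 0) then (1 : ℂ) else 0))) := by
          rw [hchar1, hchar2, ite_two_pow, ite_two_pow]
          linear_combination ((w / 2) * chi (c * sumAll f) * ψ p (p + c) *
            ((if (∀ j, g j + f j = 0) then (1 : ℂ) else 0)
              + chi p * (if (∀ j, g j + f j + 1 = 0) then (1 : ℂ) else 0))) * hr2n
  rw [Finset.sum_congr rfl fun c _ => key c]
  show _ = Rmat n hn (Hmat * ψ * Hmatᴴ) g f
  unfold Rmat
  by_cases hC0 : ∀ j, g j + f j = 0
  · have hfg : f = g := by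
      funext j
      have h2 := hC0 j
      have h : ∀ x y : Fin 2, x + y = 0 → y = x := by decide
      exact h _ _ h2
    subst hfg
    have hC1 : ¬ ∀ j : Fin n, f j + f j + 1 = 0 := by
      intro h
      have h2 := h z
      rw [fin2_add_self] at h2
      exact absurd h2 (by decide)
    rw [if_pos (fun j (_ : j ≠ z) => rfl), HH0]
    simp only [if_pos hC0, if_neg hC1, mul_zero, add_zero, mul_one, Fin.sum_univ_two]
    ring
  · by_cases hC1 : ∀ j, g j + f j + 1 = 0
    · have hfg : f = fun j => g j + 1 := by
        funext j
        have h2 := hC1 j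
        have h : ∀ x y : Fin 2, x + y + 1 = 0 → y = x + 1 := by decide
        exact h _ _ h2
      subst hfg
      have hcond : ∀ j : Fin n, j ≠ z →
          g j + g z = (fun j => g j + 1) j + (fun j => g j + 1) z :=
        fun j hj => cond_of_addc z g 1 j hj
      have hgf : sumAll g = sumAll (fun j => g j + (1 : Fin 2)) + 1 := by
        rw [sum_addc hodd g 1, add_assoc, show (1 : Fin 2) + 1 = 0 from rfl, add_zero]
      rw [if_pos hcond, hgf, HH1]
      simp only [if_neg hC0, if_pos hC1, mul_zero, zero_add, mul_one, Fin.sum_univ_two]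
      ring
    · have hnc : ¬ (∀ j : Fin n, j ≠ z → g j + g z = f j + f z) := by
        intro h
        obtain ⟨t, ht⟩ : ∃ t, f = fun j => g j + t := ⟨_, (cond_iff z g f).mp h⟩
        fin_cases t
        · refine hC0 fun j => ?_
          rw [congrFun ht j]
          have h2 : ∀ x : Fin 2, x + (x + 0) = 0 := by decide
          exact h2 _
        · refine hC1 fun j => ?_
          rw [congrFun ht j]
          have h2 : ∀ x : Fin 2, x + (x + 1) + 1 = 0 := by decide
          exact h2 _
      rw [if_neg hnc, mul_zero]
      simp only [if_neg hC0, if_neg hC1, mul_zero, add_zero, zero_add, mul_zero,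
        Finset.sum_const_zero, Fin.sum_univ_two]

end Main

/-- **Transversal Clifford gates implement logical gates on encoded states.**
For `n ≡ 1 (mod 4)` positive, the `n`-qubit encoding unitary `U`, any 2×2 complex matrix
`ψ`, and `G ∈ {H, S}`:
`G^{⊗n} · (U·(ψ ⊗ (I/2)^{⊗(n−1)})·U†) · (G^{⊗n})† = U·((G ψ G†) ⊗ (I/2)^{⊗(n−1)})·U†`. -/
theorem transversal_clifford_logical (n : ℕ) (hn : 0 < n) (h4 : n % 4 = 1)
    (ψ : Matrix (Fin 2) (Fin 2) ℂ) (G : Matrix (Fin 2) (Fin 2) ℂ)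
    (hG : G = Hmat ∨ G = Smat) :
    kronPow (n := n) G * (encU n hn * mixExt n hn ψ * (encU n hn)ᴴ) *
        (kronPow (n := n) G)ᴴ =
      encU n hn * mixExt n hn (G * ψ * Gᴴ) * (encU n hn)ᴴ := by
  have hodd : n % 2 = 1 := by omega
  rcases hG with hG | hG <;> subst hG
  · rw [encU_conj hn hodd, encU_conj hn hodd, Hcase hn h4]
  · rw [encU_conj hn hodd, encU_conj hn hodd, Scase hn h4]

end
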